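/- (Disconnected cells in convex Euclidean domains.) For every p ∈ (1,∞) with p ≠ 2 and n ≥ 2 there exist a compact convex set Ω ⊂ ℝⁿ, two points x₁, x₂ ∈ Ω, and constants b₁, b₂ ∈ ℝ such that the set H = {z ∈ Ω : −|z−x₁|^p + b₁·p > −|z−x₂|^p + b₂·p} (equivalently {z ∈ Ω : |z−x₂|^p − |z−x₁|^p > α} for suitable α) is not connected. -/

import Mathlib

set_option maxHeartbeats 1000000
open Real

variable {n : ℕ}

noncomputable def pt (i0 i1 : Fin n) (a b : ℝ) : EuclideanSpace ℝ (Fin n) :=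
  WithLp.toLp 2 (fun i => if i = i0 then a else if i = i1 then b else 0)

lemma pt_add (i0 i1 : Fin n) (a b c d : ℝ) :
    pt i0 i1 a b + pt i0 i1 c d = pt i0 i1 (a + c) (b + d) := by
  ext i
  show pt i0 i1 a b i + pt i0 i1 c d i = _
  simp only [pt, PiLp.toLp_apply]; split_ifs <;> ring

lemma pt_sub (i0 i1 : Fin n) (a b c d : ℝ) :
    pt i0 i1 a b - pt i0 i1 c d = pt i0 i1 (a - c) (b - d) := by
  ext i
  show pt i0 i1 a b i - pt i0 i1 c d i = _
  simp only [pt, PiLp.toLp_apply]; split_ifs <;> ring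

lemma pt_smul (i0 i1 : Fin n) (r a b : ℝ) :
    r • pt i0 i1 a b = pt i0 i1 (r * a) (r * b) := by
  ext i
  show r * pt i0 i1 a b i = _
  simp only [pt, PiLp.toLp_apply]; split_ifs <;> ring

lemma pt_zero (i0 i1 : Fin n) : pt i0 i1 0 0 = 0 := by
  ext i
  show pt i0 i1 0 0 i = 0
  simp only [pt, PiLp.toLp_apply]; split_ifs <;> rfl

lemma pt_apply_i1 {i0 i1 : Fin n} (hne : i0 ≠ i1) (a b : ℝ) : pt i0 i1 a b i1 = b := by
  simp [pt, Ne.symm hne, PiLp.toLp_apply]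

lemma pt_sum (i0 i1 : Fin n) {m : ℕ} (w av bv : Fin m → ℝ) :
    ∑ i, w i • pt i0 i1 (av i) (bv i)
      = pt i0 i1 (∑ i, w i * av i) (∑ i, w i * bv i) := by
  induction m with
  | zero => simp [pt_zero]
  | succ k ih =>
      rw [Fin.sum_univ_succ, Fin.sum_univ_succ, Fin.sum_univ_succ, ih, pt_smul, pt_add]

lemma pt_norm {i0 i1 : Fin n} (h : i0 ≠ i1) (a b : ℝ) :
    ‖pt i0 i1 a b‖ = Real.sqrt (a ^ 2 + b ^ 2) := by
  rw [EuclideanSpace.norm_eq]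
  congr 1
  have hcong : ∀ i, ‖pt i0 i1 a b i‖ ^ 2
      = (if i = i0 then a ^ 2 else 0) + (if i = i1 then b ^ 2 else 0) := by
    intro i
    simp only [pt, PiLp.toLp_apply, Real.norm_eq_abs, sq_abs]
    split_ifs with h1 h2
    · exact absurd (h1.symm.trans h2) h
    · ring
    · ring
    · ring
  simp only [hcong, Finset.sum_add_distrib, Finset.sum_ite_eq', Finset.mem_univ, if_true]

lemma norm_pt_rpow {i0 i1 : Fin n} (h : i0 ≠ i1) (a b p : ℝ) :
    ‖pt i0 i1 a b‖ ^ p = (a ^ 2 + b ^ 2) ^ (p / 2) := by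
  rw [pt_norm h, sqrt_eq_rpow, ← Real.rpow_mul (by positivity)]
  congr 1
  ring

noncomputable def vmap (v : Fin 4 → EuclideanSpace ℝ (Fin n)) :
    (Fin 4 → ℝ) →ₗ[ℝ] EuclideanSpace ℝ (Fin n) where
  toFun w := ∑ i, w i • v i
  map_add' w w' := by simp [add_smul, Finset.sum_add_distrib]
  map_smul' r w := by simp [smul_smul, Finset.smul_sum]

lemma vmap_compact (v : Fin 4 → EuclideanSpace ℝ (Fin n)) :
    IsCompact (vmap v '' stdSimplex ℝ (Fin 4)) :=
  (isCompact_stdSimplex ℝ _).image (vmap v).continuous_of_finiteDimensional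

lemma vmap_convex (v : Fin 4 → EuclideanSpace ℝ (Fin n)) :
    Convex ℝ (vmap v '' stdSimplex ℝ (Fin 4)) :=
  (convex_stdSimplex ℝ _).linear_image (vmap v)

lemma disconn {E : Type*} [TopologicalSpace E] (s : Set E) (g : E → ℝ) (hg : Continuous g)
    (c : ℝ) (hmem : ∀ z ∈ s, g z ≠ c) (z₁ z₂ : E) (h₁ : z₁ ∈ s) (h₂ : z₂ ∈ s)
    (hl : g z₁ < c) (hr : c < g z₂) : ¬ IsPreconnected s := by
  intro h
  obtain ⟨z, _, h1, h2⟩ := h {z | g z < c} {z | c < g z}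
    (isOpen_lt hg continuous_const) (isOpen_lt continuous_const hg)
    (fun z hz => (lt_or_gt_of_ne (hmem z hz)).imp id id)
    ⟨z₁, h₁, hl⟩ ⟨z₂, h₂, hr⟩
  exact lt_irrefl c (h2.trans h1)

lemma diff_upper {A B q : ℝ} (hB : 0 < B) (hAB : B ≤ A) (hq0 : 0 ≤ q) (hq1 : q ≤ 1) :
    A ^ q - B ^ q ≤ q * B ^ (q - 1) * (A - B) := by
  have hs : (-1:ℝ) ≤ A / B - 1 := by
    have : 0 ≤ A / B := div_nonneg (hB.le.trans hAB) hB.le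
    linarith
  have hber := rpow_one_add_le_one_add_mul_self hs hq0 hq1
  rw [add_sub_cancel] at hber
  have hA : A ^ q = B ^ q * (A / B) ^ q := by
    rw [← mul_rpow hB.le (div_nonneg (hB.le.trans hAB) hB.le), mul_div_cancel₀ _ hB.ne']
  have hBq : 0 < B ^ q := rpow_pos_of_pos hB q
  have key : A ^ q ≤ B ^ q * (1 + q * (A / B - 1)) := by
    rw [hA]; exact mul_le_mul_of_nonneg_left hber hBq.le
  have hB1 : B ^ q * (A / B - 1) = B ^ (q - 1) * (A - B) := by
    rw [rpow_sub hB, rpow_one]; field_simp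
  nlinarith [key, hB1]

lemma diff_lower {A B q : ℝ} (hB : 0 < B) (hAB : B ≤ A) (hq0 : 0 ≤ q) (hq1 : q ≤ 1) :
    q * A ^ (q - 1) * (A - B) ≤ A ^ q - B ^ q := by
  have hA : 0 < A := hB.trans_le hAB
  have hs : (-1:ℝ) ≤ B / A - 1 := by
    have : 0 ≤ B / A := div_nonneg hB.le hA.le
    linarith
  have hber := rpow_one_add_le_one_add_mul_self hs hq0 hq1
  rw [add_sub_cancel] at hber
  have hBq : B ^ q = A ^ q * (B / A) ^ q := by
    rw [← mul_rpow hA.le (div_nonneg hB.le hA.le), mul_div_cancel₀ _ hA.ne']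
  have hAq : 0 < A ^ q := rpow_pos_of_pos hA q
  have key : B ^ q ≤ A ^ q * (1 + q * (B / A - 1)) := by
    rw [hBq]; exact mul_le_mul_of_nonneg_left hber hAq.le
  have hA1 : A ^ q * (B / A - 1) = A ^ (q - 1) * (B - A) := by
    rw [rpow_sub hA, rpow_one]; field_simp
  nlinarith [key, hA1]

lemma mem_cell {i0 i1 : Fin n} (hne : i0 ≠ i1) {p : ℝ} (hp : 0 < p) (α a b c d x y : ℝ) :
    (-‖pt i0 i1 x y - pt i0 i1 c d‖ ^ p + (α / p) * p
        < -‖pt i0 i1 x y - pt i0 i1 a b‖ ^ p + 0 * p)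
      ↔ α < ((x - c) ^ 2 + (y - d) ^ 2) ^ (p / 2)
              - ((x - a) ^ 2 + (y - b) ^ 2) ^ (p / 2) := by
  rw [pt_sub, pt_sub, norm_pt_rpow hne, norm_pt_rpow hne, div_mul_cancel₀ _ hp.ne']
  constructor <;> intro <;> linarith

lemma sq_rpow {x : ℝ} (hx : 0 ≤ x) (e : ℝ) : (x ^ 2) ^ e = x ^ (2 * e) := by
  rw [← Real.rpow_natCast x 2, ← Real.rpow_mul hx]
  norm_num

lemma four_rpow (p : ℝ) : (4:ℝ) ^ (p / 2) = 2 ^ p := by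
  rw [show (4:ℝ) = (2:ℝ) ^ 2 by norm_num, sq_rpow (by norm_num : (0:ℝ) ≤ 2)]
  congr 1
  ring

lemma case_gt (n : ℕ) (i0 i1 : Fin n) (hne : i0 ≠ i1) {p : ℝ} (hgt : 2 < p) :
    ∃ (Ω : Set (EuclideanSpace ℝ (Fin n))) (x₁ x₂ : EuclideanSpace ℝ (Fin n)) (b₁ b₂ : ℝ),
      IsCompact Ω ∧ Convex ℝ Ω ∧ x₁ ∈ Ω ∧ x₂ ∈ Ω ∧
      ¬ IsPreconnected {z ∈ Ω | -‖z - x₂‖ ^ p + b₂ * p < -‖z - x₁‖ ^ p + b₁ * p} := by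
  have hp0 : (0:ℝ) < p := by linarith
  set K : ℝ := (2 ^ p) ^ (p - 2)⁻¹ with hK
  have h2p : (0:ℝ) < 2 ^ p := rpow_pos_of_pos two_pos p
  have hKpos : 0 < K := rpow_pos_of_pos h2p _
  set R : ℝ := K + 1 with hRdef
  have hR0 : 0 < R := by positivity
  have hKcol : K ^ (p - 2) = 2 ^ p := by
    rw [hK, ← Real.rpow_mul h2p.le, inv_mul_cancel₀ (by linarith : p - 2 ≠ 0), rpow_one]
  have hRpow : 2 ^ p ≤ R ^ (p - 2) := by
    rw [← hKcol]
    exact rpow_le_rpow hKpos.le (by linarith) (by linarith)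
  set α : ℝ := 2 ^ p with hα
  set av : Fin 4 → ℝ := ![-1, -1, 1, 1] with hav
  set bv : Fin 4 → ℝ := ![-R, R, -R, R] with hbv
  set v : Fin 4 → EuclideanSpace ℝ (Fin n) := fun i => pt i0 i1 (av i) (bv i) with hv
  have hmemv : ∀ w : Fin 4 → ℝ, vmap v w
      = pt i0 i1 (∑ i, w i * av i) (∑ i, w i * bv i) := fun w => pt_sum i0 i1 w av bv
  refine ⟨vmap v '' stdSimplex ℝ (Fin 4), pt i0 i1 1 0, pt i0 i1 (-1) 0, 0, α / p,
    vmap_compact v, vmap_convex v, ?_, ?_, ?_⟩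
  · refine ⟨![0, 0, 1/2, 1/2], ⟨fun i => by fin_cases i <;> norm_num, by
      simp [Fin.sum_univ_four]; norm_num⟩, ?_⟩
    rw [hmemv]
    congr 1 <;> simp [Fin.sum_univ_four, hav, hbv] <;> ring
  · refine ⟨![1/2, 1/2, 0, 0], ⟨fun i => by fin_cases i <;> norm_num, by
      simp [Fin.sum_univ_four]; norm_num⟩, ?_⟩
    rw [hmemv]
    congr 1 <;> simp [Fin.sum_univ_four, hav, hbv] <;> ring
  · -- key inequality
    have hsq : ((R:ℝ) ^ 2) ^ (p / 2) = R ^ p := by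
      rw [sq_rpow hR0.le]; congr 1; ring
    have hfac : (4 + R ^ 2 : ℝ) = R ^ 2 * (1 + 4 / R ^ 2) := by field_simp; ring
    have hber : 1 + (p / 2) * (4 / R ^ 2) ≤ (1 + 4 / R ^ 2) ^ (p / 2) :=
      one_add_mul_self_le_rpow_one_add
        (le_trans (by norm_num : (-1:ℝ) ≤ 0) (by positivity)) (by linarith)
    have hmul : (4 + R ^ 2 : ℝ) ^ (p / 2) = R ^ p * (1 + 4 / R ^ 2) ^ (p / 2) := by
      rw [hfac, mul_rpow (by positivity) (by positivity), hsq]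
    have hRp2 : R ^ p = R ^ (p - 2) * R ^ 2 := by
      rw [← Real.rpow_natCast R 2, ← Real.rpow_add hR0]; congr 1; push_cast; ring
    have hlow : R ^ p + 2 * p * R ^ (p - 2) ≤ (4 + R ^ 2) ^ (p / 2) := by
      rw [hmul]
      calc R ^ p + 2 * p * R ^ (p - 2) = R ^ p * (1 + (p / 2) * (4 / R ^ 2)) := by
            rw [hRp2]; field_simp; ring
        _ ≤ R ^ p * (1 + 4 / R ^ 2) ^ (p / 2) :=
            mul_le_mul_of_nonneg_left hber (rpow_nonneg hR0.le p)
    have key : α < (4 + R ^ 2) ^ (p / 2) - (R ^ 2) ^ (p / 2) := by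
      rw [hsq, hα]
      have h1 : 2 * p * (2 ^ p) ≤ 2 * p * R ^ (p - 2) :=
        mul_le_mul_of_nonneg_left hRpow (by linarith)
      nlinarith [h2p]
    -- disconnection
    apply disconn _ (fun z => z i1) (EuclideanSpace.proj i1).continuous 0
      _ (pt i0 i1 1 (-R)) (pt i0 i1 1 R)
    · -- z₁ ∈ H
      refine ⟨⟨![0, 0, 1, 0], ⟨fun i => by fin_cases i <;> norm_num, by
          simp [Fin.sum_univ_four]⟩, by
          rw [hmemv]; congr 1 <;> simp [Fin.sum_univ_four, hav, hbv]⟩, ?_⟩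
      rw [mem_cell hne hp0]
      have e1 : ((1:ℝ) - -1) ^ 2 + (-R - 0) ^ 2 = 4 + R ^ 2 := by ring
      have e2 : ((1:ℝ) - 1) ^ 2 + (-R - 0) ^ 2 = R ^ 2 := by ring
      rw [e1, e2]; exact key
    · refine ⟨⟨![0, 0, 0, 1], ⟨fun i => by fin_cases i <;> norm_num, by
          simp [Fin.sum_univ_four]⟩, by
          rw [hmemv]; congr 1 <;> simp [Fin.sum_univ_four, hav, hbv]⟩, ?_⟩
      rw [mem_cell hne hp0]
      have e1 : ((1:ℝ) - -1) ^ 2 + (R - 0) ^ 2 = 4 + R ^ 2 := by ring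
      have e2 : ((1:ℝ) - 1) ^ 2 + (R - 0) ^ 2 = R ^ 2 := by ring
      rw [e1, e2]; exact key
    · show pt i0 i1 1 (-R) i1 < 0
      rw [pt_apply_i1 hne]; linarith
    · show (0:ℝ) < pt i0 i1 1 R i1
      rw [pt_apply_i1 hne]; linarith
    · -- boundary: no point of H at height 0
      rintro z ⟨⟨w, hw, rfl⟩, hcond⟩ hz0
      rw [hmemv] at hcond hz0
      rw [mem_cell hne hp0] at hcond
      obtain ⟨hwpos, hwsum⟩ := hw
      have hsum4 : w 0 + w 1 + w 2 + w 3 = 1 := by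
        rw [← hwsum, Fin.sum_univ_four]
      have hXeq : ∑ i, w i * av i = -(w 0) - w 1 + w 2 + w 3 := by
        rw [Fin.sum_univ_four, hav]
        simp only [Matrix.cons_val_zero, Matrix.cons_val_one, Matrix.head_cons,
          Matrix.cons_val_two, Matrix.tail_cons, Matrix.cons_val_three]
        ring
      have hYval : ∑ i, w i * bv i = 0 := by
        have h1 : pt i0 i1 (∑ i, w i * av i) (∑ i, w i * bv i) i1 = (0:ℝ) := hz0
        rwa [pt_apply_i1 hne] at h1
      rw [hXeq, hYval] at hcond
      have hX1 : -1 ≤ -(w 0) - w 1 + w 2 + w 3 ∧ -(w 0) - w 1 + w 2 + w 3 ≤ 1 := by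
        constructor <;> nlinarith [hwpos 0, hwpos 1, hwpos 2, hwpos 3]
      have hb1 : ((-(w 0) - w 1 + w 2 + w 3 - -1) ^ 2 + ((0:ℝ) - 0) ^ 2) ^ (p / 2) ≤ α := by
        rw [hα, ← four_rpow p]
        apply rpow_le_rpow (by positivity) _ (by positivity)
        nlinarith [hX1.1, hX1.2]
      have hb2 : 0 ≤ ((-(w 0) - w 1 + w 2 + w 3 - 1) ^ 2 + ((0:ℝ) - 0) ^ 2) ^ (p / 2) :=
        rpow_nonneg (by positivity) _
      linarith

section auxnums

lemma aux_ab {a b u : ℝ} (h : a * b = u) (hb : 4 ≤ b) (ha : 0 < a) : 4 * a ≤ u := by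
  nlinarith

lemma aux_ab8 {a b u : ℝ} (h : a * b = u) (hb : 8 ≤ b) (ha : 0 < a) (hu : 4 ≤ u) :
    4 * a + 1 + 1 ≤ u := by nlinarith

lemma aux_SSu {S u : ℝ} (hS : 0 < S) (hu : 4 ≤ u) : S < S * u := by nlinarith

lemma aux_uSu {S u : ℝ} (hS : 2 ≤ S) (hu : 0 < u) : u ≤ S * u := by nlinarith

lemma aux_alpha1 {α X P : ℝ} (h : α * X = P) (hPX : P < X) (hX : 0 < X) (hα : 0 < α) :
    α < 1 := by nlinarith

lemma aux_sqle {M T : ℝ} (hM : 1 ≤ M) : (M - 1) ^ 2 + T ^ 2 ≤ (M - -1) ^ 2 + T ^ 2 := by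
  nlinarith

lemma aux_A2T {M T : ℝ} (hMT : M + 1 ≤ T) (hM : 1 ≤ M) :
    (M - -1) ^ 2 + T ^ 2 ≤ 2 * T ^ 2 := by nlinarith

lemma aux_core {a e : ℝ} (h2q : (1:ℝ) / 2 < e) (ha : 0 < a) :
    2 * a < e * (4 * a + 1) := by nlinarith

lemma aux_final {a e t p : ℝ} (hp : 0 < p) (ht : 0 < t)
    (hcore : 2 * a < e * (4 * a + 1)) :
    4 * p * (a * t) < p / 2 * (e * t) * (4 * (4 * a + 1 - 1) + 4) := by
  have h2pt : (0:ℝ) < 2 * p * t := by positivity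
  nlinarith [mul_lt_mul_of_pos_left hcore h2pt]

lemma aux_MS {a u S : ℝ} (h : 4 * a ≤ u) (hS : 0 < S) :
    (4 * a + 1 - 1) * S ≤ S * u := by nlinarith

lemma aux_c3M {c T S M : ℝ} (hc : 0 ≤ c) (hcT : c * T = S) (hT : 0 < T) (hM : 1 ≤ M)
    (hMS : (M - 1) * S ≤ T) : c * (M - 1) ≤ 1 := by
  have h1 : (M - 1) * (c * T) ≤ T := by rw [hcT]; exact hMS
  nlinarith

lemma aux_Xle {w0 w1 c M X : ℝ} (h0 : 0 ≤ w0) (hsum : w0 + w1 + c = 1)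
    (hX : X = -w0 + w1 + c * M) (hcM : c * (M - 1) ≤ 1) : X ≤ 2 := by nlinarith

lemma aux_sqneg {X S : ℝ} (hX : X ≤ 0) :
    (X - -1) ^ 2 + (S - 0) ^ 2 ≤ (X - 1) ^ 2 + (S - 0) ^ 2 := by nlinarith

lemma aux_B0 {X S : ℝ} (hS : 0 < S) : 0 < (X - 1) ^ 2 + (S - 0) ^ 2 := by
  nlinarith [sq_nonneg (X - 1)]

lemma aux_sqpos {X S : ℝ} (hX : 0 < X) :
    (X - 1) ^ 2 + (S - 0) ^ 2 ≤ (X - -1) ^ 2 + (S - 0) ^ 2 := by nlinarith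

end auxnums

lemma case_lt (n : ℕ) (i0 i1 : Fin n) (hne : i0 ≠ i1) {p : ℝ} (hp : 1 < p) (hlt : p < 2) :
    ∃ (Ω : Set (EuclideanSpace ℝ (Fin n))) (x₁ x₂ : EuclideanSpace ℝ (Fin n)) (b₁ b₂ : ℝ),
      IsCompact Ω ∧ Convex ℝ Ω ∧ x₁ ∈ Ω ∧ x₂ ∈ Ω ∧
      ¬ IsPreconnected {z ∈ Ω | -‖z - x₂‖ ^ p + b₂ * p < -‖z - x₁‖ ^ p + b₁ * p} := by
  have hp0 : (0:ℝ) < p := by linarith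
  have h2mp : (0:ℝ) < 2 - p := by linarith
  have hpm1 : (0:ℝ) < p - 1 := by linarith
  have hq0 : (0:ℝ) ≤ p / 2 := by linarith
  have hq1 : p / 2 ≤ 1 := by linarith
  set S : ℝ := (4 * p) ^ (2 - p)⁻¹ + 1 with hSdef
  set u : ℝ := 4 ^ (p - 1)⁻¹ + 8 ^ (p - 1)⁻¹ + 4 with hudef
  set T : ℝ := S * u with hTdef
  set M : ℝ := 4 * u ^ (2 - p) + 1 with hMdef
  set α : ℝ := 4 * p * S ^ (p - 2) with hαdef
  have hK1 : 1 ≤ (4 * p) ^ (2 - p)⁻¹ := by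
    rw [show (1:ℝ) = 1 ^ (2 - p)⁻¹ from (one_rpow _).symm]
    exact rpow_le_rpow (by norm_num) (by linarith) (by positivity)
  have hS2 : 2 ≤ S := by rw [hSdef]; linarith
  have hS0 : 0 < S := by linarith
  have hSpow : 4 * p < S ^ (2 - p) := by
    have hcol : ((4 * p) ^ (2 - p)⁻¹) ^ (2 - p) = 4 * p := by
      rw [← Real.rpow_mul (by linarith : (0:ℝ) ≤ 4 * p),
        inv_mul_cancel₀ h2mp.ne', rpow_one]
    have hlt2 : (4 * p) ^ (2 - p)⁻¹ < S := by rw [hSdef]; linarith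
    calc 4 * p = ((4 * p) ^ (2 - p)⁻¹) ^ (2 - p) := hcol.symm
      _ < S ^ (2 - p) := rpow_lt_rpow (by positivity) hlt2 h2mp
  have h4e : (0:ℝ) < 4 ^ (p - 1)⁻¹ := by positivity
  have h8e : (0:ℝ) < 8 ^ (p - 1)⁻¹ := by positivity
  have hu0 : 0 < u := by rw [hudef]; positivity
  have hu4 : 4 ≤ u := by rw [hudef]; linarith
  have hcol4 : ((4:ℝ) ^ (p - 1)⁻¹) ^ (p - 1) = 4 := by
    rw [← Real.rpow_mul (by norm_num : (0:ℝ) ≤ 4), inv_mul_cancel₀ hpm1.ne', rpow_one]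
  have hcol8 : ((8:ℝ) ^ (p - 1)⁻¹) ^ (p - 1) = 8 := by
    rw [← Real.rpow_mul (by norm_num : (0:ℝ) ≤ 8), inv_mul_cancel₀ hpm1.ne', rpow_one]
  have hup4 : 4 ≤ u ^ (p - 1) := by
    rw [← hcol4]
    exact rpow_le_rpow h4e.le (by rw [hudef]; linarith) hpm1.le
  have hup8 : 8 ≤ u ^ (p - 1) := by
    rw [← hcol8]
    exact rpow_le_rpow h8e.le (by rw [hudef]; linarith) hpm1.le
  have ha0 : 0 < u ^ (2 - p) := rpow_pos_of_pos hu0 _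
  have hsplit : u ^ (2 - p) * u ^ (p - 1) = u := by
    rw [← Real.rpow_add hu0, show (2 - p) + (p - 1) = (1:ℝ) by ring, rpow_one]
  have hF4 : 4 * u ^ (2 - p) ≤ u := aux_ab hsplit hup4 ha0
  have hMu : M + 1 ≤ u := by rw [hMdef]; exact aux_ab8 hsplit hup8 ha0 hu4
  have hM1 : 1 ≤ M := by rw [hMdef]; linarith [ha0]
  have hT0 : 0 < T := by rw [hTdef]; positivity
  have hTS : S < T := by rw [hTdef]; exact aux_SSu hS0 hu4
  have hMT : M + 1 ≤ T := by
    have h1 : u ≤ T := by rw [hTdef]; exact aux_uSu hS2 hu0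
    linarith
  have hsp : 0 < S ^ (p - 2) := rpow_pos_of_pos hS0 _
  have hα0 : 0 < α := by rw [hαdef]; positivity
  have hSneg : S ^ (p - 2) = (S ^ (2 - p))⁻¹ := by
    rw [show p - 2 = -(2 - p) by ring, Real.rpow_neg hS0.le]
  have hα1 : α < 1 := by
    have hx : 0 < S ^ (2 - p) := rpow_pos_of_pos hS0 _
    have hmulα : α * S ^ (2 - p) = 4 * p := by
      rw [hαdef, hSneg]; field_simp
    exact aux_alpha1 hmulα hSpow hx hα0
  have hα2p : α < 2 ^ p := by
    have h21 : (2:ℝ) ^ (1:ℝ) < 2 ^ p := rpow_lt_rpow_of_exponent_lt (by norm_num) hp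
    rw [rpow_one] at h21
    linarith
  set av : Fin 4 → ℝ := ![-1, 1, M, M] with hav
  set bv : Fin 4 → ℝ := ![0, 0, T, T] with hbv
  set v : Fin 4 → EuclideanSpace ℝ (Fin n) := fun i => pt i0 i1 (av i) (bv i) with hv
  have hmemv : ∀ w : Fin 4 → ℝ, vmap v w
      = pt i0 i1 (∑ i, w i * av i) (∑ i, w i * bv i) := fun w => pt_sum i0 i1 w av bv
  have hx1mem : pt i0 i1 1 0 ∈ vmap v '' stdSimplex ℝ (Fin 4) := by
    refine ⟨![0, 1, 0, 0], ⟨fun i => by fin_cases i <;> norm_num, by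
      simp [Fin.sum_univ_four]⟩, ?_⟩
    rw [hmemv]
    congr 1 <;> simp [Fin.sum_univ_four, hav, hbv]
  have hx2mem : pt i0 i1 (-1) 0 ∈ vmap v '' stdSimplex ℝ (Fin 4) := by
    refine ⟨![1, 0, 0, 0], ⟨fun i => by fin_cases i <;> norm_num, by
      simp [Fin.sum_univ_four]⟩, ?_⟩
    rw [hmemv]
    congr 1 <;> simp [Fin.sum_univ_four, hav, hbv]
  refine ⟨vmap v '' stdSimplex ℝ (Fin 4), pt i0 i1 1 0, pt i0 i1 (-1) 0, 0, α / p,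
    vmap_compact v, vmap_convex v, hx1mem, hx2mem, ?_⟩
  have hBpos : (0:ℝ) < (M - 1) ^ 2 + T ^ 2 := by positivity
  have hABle := aux_sqle (T := T) hM1
  have dl := diff_lower hBpos hABle hq0 hq1
  have hA0 : (0:ℝ) < (M - -1) ^ 2 + T ^ 2 := lt_of_lt_of_le hBpos hABle
  have hA2T := aux_A2T hMT hM1
  have hmono : (2 * T ^ 2) ^ (p / 2 - 1) ≤ ((M - -1) ^ 2 + T ^ 2) ^ (p / 2 - 1) :=
    rpow_le_rpow_of_nonpos hA0 hA2T (by linarith)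
  have ht0 : 0 < T ^ (p - 2) := rpow_pos_of_pos hT0 _
  have e3 : (2 * T ^ 2) ^ (p / 2 - 1) = 2 ^ (p / 2 - 1) * T ^ (p - 2) := by
    rw [mul_rpow (by norm_num) (by positivity), sq_rpow hT0.le]
    congr 2
    ring
  have hST : S ^ (p - 2) = u ^ (2 - p) * T ^ (p - 2) := by
    rw [hTdef, mul_rpow hS0.le hu0.le, ← mul_assoc,
      mul_comm (u ^ (2 - p)) (S ^ (p - 2)), mul_assoc, ← Real.rpow_add hu0,
      show (2 - p) + (p - 2) = (0:ℝ) by ring, rpow_zero, mul_one]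
  have h2q : (1:ℝ) / 2 < 2 ^ (p / 2 - 1) := by
    have h1 := rpow_lt_rpow_of_exponent_lt (by norm_num : (1:ℝ) < 2)
      (by linarith : (-1:ℝ) < p / 2 - 1)
    rw [show ((2:ℝ) ^ (-1:ℝ)) = 1 / 2 by
      rw [Real.rpow_neg (by norm_num), rpow_one]; norm_num] at h1
    exact h1
  have key2 : α < ((M - -1) ^ 2 + T ^ 2) ^ (p / 2)
      - ((M - 1) ^ 2 + T ^ 2) ^ (p / 2) := by
    have eAB : ((M - -1) ^ 2 + T ^ 2) - ((M - 1) ^ 2 + T ^ 2) = 4 * M := by ring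
    rw [eAB] at dl
    have step1 : p / 2 * ((2 * T ^ 2) ^ (p / 2 - 1)) * (4 * M)
        ≤ p / 2 * (((M - -1) ^ 2 + T ^ 2) ^ (p / 2 - 1)) * (4 * M) :=
      mul_le_mul_of_nonneg_right (mul_le_mul_of_nonneg_left hmono hq0)
        (by linarith : (0:ℝ) ≤ 4 * M)
    have hcore := aux_core h2q ha0
    have final : α < p / 2 * ((2 * T ^ 2) ^ (p / 2 - 1)) * (4 * M) := by
      rw [hαdef, hST, e3, hMdef]
      have h1 := aux_final (a := u ^ (2 - p)) (e := 2 ^ (p / 2 - 1)) (t := T ^ (p - 2))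
        hp0 ht0 hcore
      calc 4 * p * (u ^ (2 - p) * T ^ (p - 2))
          < p / 2 * (2 ^ (p / 2 - 1) * T ^ (p - 2))
            * (4 * (4 * u ^ (2 - p) + 1 - 1) + 4) := h1
        _ = p / 2 * (2 ^ (p / 2 - 1) * T ^ (p - 2)) * (4 * (4 * u ^ (2 - p) + 1)) := by
            ring
    linarith
  apply disconn _ (fun z => z i1) (EuclideanSpace.proj i1).continuous S
    _ (pt i0 i1 1 0) (pt i0 i1 M T)
  · refine ⟨hx1mem, ?_⟩
    rw [mem_cell hne hp0]
    have e1 : ((1:ℝ) - -1) ^ 2 + ((0:ℝ) - 0) ^ 2 = 4 := by norm_num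
    have e2 : ((1:ℝ) - 1) ^ 2 + ((0:ℝ) - 0) ^ 2 = 0 := by norm_num
    rw [e1, e2, Real.zero_rpow (show (0:ℝ) < p / 2 by linarith).ne', four_rpow]
    linarith
  · refine ⟨⟨![0, 0, 1, 0], ⟨fun i => by fin_cases i <;> norm_num, by
        simp [Fin.sum_univ_four]⟩, by
        rw [hmemv]; congr 1 <;> simp [Fin.sum_univ_four, hav, hbv]⟩, ?_⟩
    rw [mem_cell hne hp0]
    have e1 : (M - -1) ^ 2 + (T - 0) ^ 2 = (M - -1) ^ 2 + T ^ 2 := by ring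
    have e2 : (M - 1) ^ 2 + (T - 0) ^ 2 = (M - 1) ^ 2 + T ^ 2 := by ring
    rw [e1, e2]
    exact key2
  · show pt i0 i1 1 0 i1 < S
    rw [pt_apply_i1 hne]; linarith
  · show S < pt i0 i1 M T i1
    rw [pt_apply_i1 hne]; exact hTS
  · rintro z ⟨⟨w, hw, rfl⟩, hcond⟩ hzS
    rw [hmemv] at hcond hzS
    rw [mem_cell hne hp0] at hcond
    obtain ⟨hwpos, hwsum⟩ := hw
    have hsum4 : w 0 + w 1 + w 2 + w 3 = 1 := by
      rw [← hwsum, Fin.sum_univ_four]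
    have hXeq : ∑ i, w i * av i = -(w 0) + w 1 + (w 2 + w 3) * M := by
      rw [Fin.sum_univ_four, hav]
      simp only [Matrix.cons_val_zero, Matrix.cons_val_one, Matrix.head_cons,
        Matrix.cons_val_two, Matrix.tail_cons, Matrix.cons_val_three]
      ring
    have hYeq : ∑ i, w i * bv i = (w 2 + w 3) * T := by
      rw [Fin.sum_univ_four, hbv]
      simp only [Matrix.cons_val_zero, Matrix.cons_val_one, Matrix.head_cons,
        Matrix.cons_val_two, Matrix.tail_cons, Matrix.cons_val_three]
      ring
    have hc3 : (w 2 + w 3) * T = S := by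
      have h1 : pt i0 i1 (∑ i, w i * av i) (∑ i, w i * bv i) i1 = S := hzS
      rw [pt_apply_i1 hne, hYeq] at h1
      exact h1
    rw [hXeq, hYeq, hc3] at hcond
    have hMS : (M - 1) * S ≤ T := by
      rw [hMdef, hTdef]; exact aux_MS hF4 hS0
    have hc3M : (w 2 + w 3) * (M - 1) ≤ 1 :=
      aux_c3M (by linarith [hwpos 2, hwpos 3]) hc3 hT0 hM1 hMS
    have hXle : -(w 0) + w 1 + (w 2 + w 3) * M ≤ 2 :=
      aux_Xle (hwpos 0) (by linarith [hsum4]) rfl hc3M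
    set X : ℝ := -(w 0) + w 1 + (w 2 + w 3) * M with hXdef
    have hub : ((X - -1) ^ 2 + (S - 0) ^ 2) ^ (p / 2)
        - ((X - 1) ^ 2 + (S - 0) ^ 2) ^ (p / 2) ≤ α := by
      by_cases hX0 : X ≤ 0
      · have h1 := rpow_le_rpow (by positivity : (0:ℝ) ≤ (X - -1) ^ 2 + (S - 0) ^ 2)
          (aux_sqneg (S := S) hX0) hq0
        linarith [h1, hα0]
      · push_neg at hX0
        have hB0 : (0:ℝ) < (X - 1) ^ 2 + (S - 0) ^ 2 := aux_B0 hS0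
        have du := diff_upper hB0 (aux_sqpos (S := S) hX0) hq0 hq1
        have eAB : ((X - -1) ^ 2 + (S - 0) ^ 2) - ((X - 1) ^ 2 + (S - 0) ^ 2) = 4 * X := by
          ring
        rw [eAB] at du
        have hBS : S ^ 2 ≤ (X - 1) ^ 2 + (S - 0) ^ 2 := by
          linarith [sq_nonneg (X - 1), sq_nonneg S]
        have hmono2 : ((X - 1) ^ 2 + (S - 0) ^ 2) ^ (p / 2 - 1) ≤ (S ^ 2) ^ (p / 2 - 1) :=
          rpow_le_rpow_of_nonpos (by positivity) hBS (by linarith)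
        have e4 : (S ^ 2) ^ (p / 2 - 1) = S ^ (p - 2) := by
          rw [sq_rpow hS0.le]; congr 1; ring
        rw [e4] at hmono2
        have t1 : p / 2 * ((X - 1) ^ 2 + (S - 0) ^ 2) ^ (p / 2 - 1) * (4 * X)
            ≤ p / 2 * S ^ (p - 2) * (4 * X) :=
          mul_le_mul_of_nonneg_right (mul_le_mul_of_nonneg_left hmono2 hq0)
            (by linarith : (0:ℝ) ≤ 4 * X)
        have t2 : p / 2 * S ^ (p - 2) * (4 * X) ≤ p / 2 * S ^ (p - 2) * 8 :=
          mul_le_mul_of_nonneg_left (by linarith) (by positivity)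
        have e5 : p / 2 * S ^ (p - 2) * 8 = α := by rw [hαdef]; ring
        linarith
    linarith

/-- Disconnected cells in convex Euclidean domains: for every `p ∈ (1,∞)`, `p ≠ 2` and
`n ≥ 2` there are a compact convex `Ω ⊂ ℝⁿ`, points `x₁, x₂ ∈ Ω` and constants
`b₁, b₂` such that the cell `{z ∈ Ω | −‖z−x₁‖^p + b₁·p > −‖z−x₂‖^p + b₂·p}` is not
connected. -/
theorem stmt16 (n : ℕ) (hn : 2 ≤ n) (p : ℝ) (hp : 1 < p) (hp2 : p ≠ 2) :
    ∃ (Ω : Set (EuclideanSpace ℝ (Fin n))) (x₁ x₂ : EuclideanSpace ℝ (Fin n))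
      (b₁ b₂ : ℝ), IsCompact Ω ∧ Convex ℝ Ω ∧ x₁ ∈ Ω ∧ x₂ ∈ Ω ∧
      ¬ IsPreconnected {z ∈ Ω | -‖z - x₂‖ ^ p + b₂ * p < -‖z - x₁‖ ^ p + b₁ * p} := by
  have h0 : (0:ℕ) < n := by omega
  have h1 : (1:ℕ) < n := by omega
  have hne : (⟨0, h0⟩ : Fin n) ≠ (⟨1, h1⟩ : Fin n) := by
    simp [Fin.ext_iff]
  rcases lt_or_gt_of_ne hp2 with hlt | hgt
  · exact case_lt n ⟨0, h0⟩ ⟨1, h1⟩ hne hp hlt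
  · exact case_gt n ⟨0, h0⟩ ⟨1, h1⟩ hne hgt
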